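/- Let R be a discrete valuation ring with uniformizer π and residue field κ, and let I ⊆ R × R be the set of pairs (π^a λ, π^b μ) with λ, μ units, viewed inside a subring A ⊆ R × R closed under multiplication containing (π,π). Suppose p is the smallest integer q > 0 such that A contains a nonzero element of the form (π^q λ, 0) with λ a unit, and similarly q' is the smallest such integer for elements (0, π^{q'} μ) with μ a unit. If A contains an element (λ, μ) with λ, μ units (same residue class), then p = q'. -/

import Mathlib

/-- Local content of Proposition 3.1.3(2) (`p = q`): in a subring `A ⊆ R × R` of a product
of two copies of a DVR containing `(π, π)`, if `p` is the smallest positive exponent such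
that `A` contains an element `(π^p λ, 0)` with `λ` a unit, and the unit `λ` lifts to an
element `(λ, μ) ∈ A` with `μ` a unit, and symmetrically `q'` is the smallest positive
exponent with `(0, π^{q'} μ') ∈ A`, `μ'` a unit lifting to `(λ', μ') ∈ A` with `λ'` a
unit, then `p = q'`. -/
theorem stmt10 (R : Type*) [CommRing R] [IsDomain R] [IsDiscreteValuationRing R]
    (π : R) (hπ : Irreducible π)
    (A : Subring (R × R)) (hπA : ((π, π) : R × R) ∈ A)
    (p q' : ℕ) (hp : 0 < p) (hq' : 0 < q')
    (hpmem : ∃ lam mu : R, IsUnit lam ∧ IsUnit mu ∧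
      ((π ^ p * lam, 0) : R × R) ∈ A ∧ ((lam, mu) : R × R) ∈ A)
    (hpmin : ∀ (q : ℕ) (lam : R), 0 < q → IsUnit lam →
      ((π ^ q * lam, 0) : R × R) ∈ A → p ≤ q)
    (hq'mem : ∃ lam' mu' : R, IsUnit lam' ∧ IsUnit mu' ∧
      (((0 : R), π ^ q' * mu') : R × R) ∈ A ∧ ((lam', mu') : R × R) ∈ A)
    (hq'min : ∀ (q : ℕ) (mu : R), 0 < q → IsUnit mu →
      (((0 : R), π ^ q * mu) : R × R) ∈ A → q' ≤ q) :
    p = q' := by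
  obtain ⟨lam, mu, hlam, hmu, h1, h2⟩ := hpmem
  obtain ⟨lam', mu', hlam', hmu', h1', h2'⟩ := hq'mem
  have hπp : ((π, π) : R × R) ^ p ∈ A := A.pow_mem hπA p
  have hπq : ((π, π) : R × R) ^ q' ∈ A := A.pow_mem hπA q'
  have e1 : (((0 : R), π ^ p * mu) : R × R) ∈ A := by
    have := A.sub_mem (A.mul_mem hπp h2) h1
    simpa [Prod.pow_mk, Prod.mk_mul_mk, Prod.mk_sub_mk] using this
  have e2 : ((π ^ q' * lam', (0 : R)) : R × R) ∈ A := by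
    have := A.sub_mem (A.mul_mem hπq h2') h1'
    simpa [Prod.pow_mk, Prod.mk_mul_mk, Prod.mk_sub_mk] using this
  exact le_antisymm (hpmin q' lam' hq' hlam' e2) (hq'min p mu hp hmu e1)
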